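/- Define q_n(−2a) = (1/π) ∫_{−2}^{2} U_n(u/2) √(1 − u²/4)/(−2a − u) du for real a with |a| ≥ 1, where U_n is the Chebyshev polynomial of the second kind. Then q_n(−2a) = −(ω(a) U_n(−a) + U_{n−1}(−a)), where ω(a) = a − sgn(a)√(a² − 1) and U_{−1} = 0. -/

import Mathlib

open Real intervalIntegral MeasureTheory Set Polynomial

/-- `ω(a) = a - sgn(a)·√(a² - 1)`. -/
noncomputable def omegaFn (a : ℝ) : ℝ := a - Real.sign a * Real.sqrt (a ^ 2 - 1)

namespace QFnAux

/-- The basic integrand after the substitution `u = 2t`. -/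
noncomputable def chebF (a : ℝ) (n : ℤ) (t : ℝ) : ℝ :=
  (Chebyshev.U ℝ n).eval t * Real.sqrt (1 - t ^ 2) / (a + t)

lemma sinInt (c : ℝ) (h1 : c ^ 2 ≠ 1) (h2 : Real.sin (c * π) = 0) :
    (∫ θ in (0:ℝ)..π, Real.sin (c * θ) * Real.sin θ) = 0 := by
  have key : ∀ θ : ℝ, HasDerivAt
      (fun θ : ℝ => (Real.sin (c*θ) * Real.cos θ - c * Real.cos (c*θ) * Real.sin θ)/(c^2-1))
      (Real.sin (c*θ) * Real.sin θ) θ := by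
    intro θ
    have h1' : HasDerivAt (fun θ : ℝ => Real.sin (c*θ)) (Real.cos (c*θ) * c) θ :=
      (Real.hasDerivAt_sin (c*θ)).comp θ (by simpa using (hasDerivAt_id θ).const_mul c)
    have h2' : HasDerivAt (fun θ : ℝ => Real.cos (c*θ)) (-Real.sin (c*θ) * c) θ :=
      (Real.hasDerivAt_cos (c*θ)).comp θ (by simpa using (hasDerivAt_id θ).const_mul c)
    have := ((h1'.mul (Real.hasDerivAt_cos θ)).sub
      ((h2'.const_mul c).mul (Real.hasDerivAt_sin θ))).div_const (c^2-1)
    refine this.congr_deriv (Eq.symm ?_)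
    have hc : c^2 - 1 ≠ 0 := sub_ne_zero.mpr h1
    field_simp
    ring
  rw [integral_eq_sub_of_hasDerivAt (fun θ _ => key θ)
    (by apply Continuous.intervalIntegrable; continuity)]
  simp [h2]

lemma Ksub (m : ℤ) : (∫ t in (-1:ℝ)..1, (Chebyshev.U ℝ m).eval t * Real.sqrt (1 - t ^ 2))
    = ∫ θ in (0:ℝ)..π, Real.sin ((m+1) * θ) * Real.sin θ := by
  have hg : Continuous (fun t : ℝ => (Chebyshev.U ℝ m).eval t * Real.sqrt (1 - t ^ 2)) :=
    ((Chebyshev.U ℝ m).continuous).mul (Real.continuous_sqrt.comp (continuous_const.sub (continuous_pow 2)))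
  have hderiv : ∀ θ ∈ uIcc (0:ℝ) π, HasDerivAt Real.cos (-Real.sin θ) θ :=
    fun θ _ => Real.hasDerivAt_cos θ
  have hcont : ContinuousOn (fun θ : ℝ => -Real.sin θ) (uIcc 0 π) :=
    (Real.continuous_sin.neg).continuousOn
  have key := integral_comp_smul_deriv hderiv hcont hg
  rw [Real.cos_zero, Real.cos_pi, integral_symm (-1 : ℝ) 1] at key
  have h2 : (∫ θ in (0:ℝ)..π, -Real.sin θ •
      ((fun t : ℝ => (Chebyshev.U ℝ m).eval t * Real.sqrt (1 - t ^ 2)) ∘ Real.cos) θ)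
      = ∫ θ in (0:ℝ)..π, -(Real.sin ((m+1) * θ) * Real.sin θ) := by
    apply integral_congr
    intro θ hθ
    rw [uIcc_of_le Real.pi_nonneg] at hθ
    have hs : 0 ≤ Real.sin θ := Real.sin_nonneg_of_nonneg_of_le_pi hθ.1 hθ.2
    have hsq : Real.sqrt (1 - Real.cos θ ^ 2) = Real.sin θ := by
      rw [show 1 - Real.cos θ ^ 2 = Real.sin θ ^ 2 by rw [Real.sin_sq]]
      exact Real.sqrt_sq hs
    simp only [Function.comp, smul_eq_mul, hsq]
    have hU := Polynomial.Chebyshev.U_real_cos θ m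
    push_cast at hU ⊢
    nlinarith [hU]
  rw [h2, intervalIntegral.integral_neg] at key
  linarith [key]

lemma Kzero (m : ℤ) (hm : 1 ≤ m) :
    (∫ t in (-1:ℝ)..1, (Chebyshev.U ℝ m).eval t * Real.sqrt (1 - t ^ 2)) = 0 := by
  rw [Ksub m]
  have h1 : ((m:ℝ)+1)^2 ≠ 1 := by
    have : (1:ℝ) ≤ (m:ℝ) := by exact_mod_cast hm
    nlinarith
  have h2 : Real.sin (((m:ℝ)+1) * π) = 0 := by
    have := Real.sin_int_mul_pi (m+1)
    push_cast at this
    exact this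
  exact sinInt _ h1 h2

lemma Kzero' : (∫ t in (-1:ℝ)..1, (Chebyshev.U ℝ 0).eval t * Real.sqrt (1 - t ^ 2)) = π/2 := by
  simp only [Chebyshev.U_zero, Polynomial.eval_one, one_mul]
  exact integral_sqrt_one_sub_sq

/-- derivative of the antiderivative, case `a > 1` -/
lemma hasDeriv_gt (a : ℝ) (ha : 1 < a) (t : ℝ) (ht1 : -1 < t) (ht2 : t < 1) :
    HasDerivAt (fun t => a * arcsin t + Real.sqrt (1 - t^2)
      - Real.sqrt (a^2-1) * arcsin ((1 + a*t)/(a+t)))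
      (Real.sqrt (1 - t^2) / (a + t)) t := by
  have hat : 0 < a + t := by linarith
  have h1t : 0 < 1 - t^2 := by nlinarith
  have ha1 : 0 < a^2 - 1 := by nlinarith
  have hs1 : 0 < Real.sqrt (1 - t^2) := Real.sqrt_pos.mpr h1t
  have hs2 : 0 < Real.sqrt (a^2 - 1) := Real.sqrt_pos.mpr ha1
  set s1 := Real.sqrt (1 - t^2) with hs1def
  set s2 := Real.sqrt (a^2 - 1) with hs2def
  have hsq1 : s1^2 = 1 - t^2 := Real.sq_sqrt h1t.le
  have hsq2 : s2^2 = a^2 - 1 := Real.sq_sqrt ha1.le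
  set g : ℝ → ℝ := fun t => (1 + a*t)/(a+t) with hgdef
  have hgsq : 1 - g t ^ 2 = (a^2-1) * (1-t^2) / (a+t)^2 := by
    rw [hgdef]; field_simp; ring
  have hgpos : 0 < 1 - g t ^ 2 := by
    rw [hgsq]; positivity
  have hg1 : g t ≠ -1 := by intro h; rw [h] at hgpos; norm_num at hgpos
  have hg2 : g t ≠ 1 := by intro h; rw [h] at hgpos; norm_num at hgpos
  have hsqrtg : Real.sqrt (1 - g t ^ 2) = s2 * s1 / (a + t) := by
    rw [show 1 - g t ^ 2 = (s2 * s1 / (a+t))^2 by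
      rw [hgsq, div_pow, mul_pow, hsq1, hsq2]]
    exact Real.sqrt_sq (by positivity)
  have d1 : HasDerivAt (fun t : ℝ => a * arcsin t) (a * (1 / Real.sqrt (1 - t^2))) t :=
    (Real.hasDerivAt_arcsin (by linarith) (by linarith)).const_mul a
  have d2 : HasDerivAt (fun t : ℝ => Real.sqrt (1 - t^2)) (-(2*t) / (2 * s1)) t := by
    have hin : HasDerivAt (fun t : ℝ => 1 - t^2) (-(2*t)) t := by
      simpa using ((hasDerivAt_pow 2 t).const_sub 1)
    exact hin.sqrt (by positivity)
  have d3 : HasDerivAt g ((a * (a+t) - (1 + a*t) * 1)/(a+t)^2) t := by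
    have hnum : HasDerivAt (fun t : ℝ => 1 + a*t) a t := by
      simpa using ((hasDerivAt_id t).const_mul a).const_add 1
    have hden : HasDerivAt (fun t : ℝ => a + t) 1 t := by
      simpa using (hasDerivAt_id t).const_add a
    exact hnum.div hden (ne_of_gt hat)
  have d4 : HasDerivAt (fun t : ℝ => arcsin (g t))
      ((1 / Real.sqrt (1 - g t ^ 2)) * ((a * (a+t) - (1 + a*t) * 1)/(a+t)^2)) t :=
    (Real.hasDerivAt_arcsin hg1 hg2).comp t d3
  have D := (d1.add d2).sub (d4.const_mul s2)
  refine D.congr_deriv (Eq.symm ?_)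
  rw [hsqrtg, ← hs1def]
  have h1 : a * (a+t) - (1+a*t)*1 = s2^2 := by rw [hsq2]; ring
  rw [h1]
  field_simp
  linear_combination hsq1 + hsq2

/-- derivative of the antiderivative, case `a = 1` -/
lemma hasDeriv_eq (t : ℝ) (ht1 : -1 < t) (ht2 : t < 1) :
    HasDerivAt (fun t => arcsin t + Real.sqrt (1 - t^2))
      (Real.sqrt (1 - t^2) / (1 + t)) t := by
  have h1t : 0 < 1 - t^2 := by nlinarith
  have hs1 : 0 < Real.sqrt (1 - t^2) := Real.sqrt_pos.mpr h1t
  have hsq1 : Real.sqrt (1 - t^2) ^2 = 1 - t^2 := Real.sq_sqrt h1t.le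
  have d1 : HasDerivAt arcsin (1 / Real.sqrt (1 - t^2)) t :=
    Real.hasDerivAt_arcsin (by linarith) (by linarith)
  have d2 : HasDerivAt (fun t : ℝ => Real.sqrt (1 - t^2)) (-(2*t) / (2 * Real.sqrt (1 - t^2))) t := by
    have hin : HasDerivAt (fun t : ℝ => 1 - t^2) (-(2*t)) t := by
      simpa using ((hasDerivAt_pow 2 t).const_sub 1)
    exact hin.sqrt (by positivity)
  have D := d1.add d2
  refine D.congr_deriv (Eq.symm ?_)
  have h1pt : (0:ℝ) < 1 + t := by linarith
  field_simp
  linear_combination hsq1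

/-- integrability of the base integrand, `a ≥ 1`. -/
lemma int0_ge (a : ℝ) (ha : 1 ≤ a) :
    IntervalIntegrable (fun t => Real.sqrt (1 - t^2) / (a + t)) volume (-1) 1 := by
  rcases eq_or_lt_of_le ha with h1 | h1
  · -- a = 1 : comparison with (1+t)^(-1/2)
    subst h1
    have hint : IntervalIntegrable (fun t : ℝ => Real.sqrt 2 * (1+t) ^ (-(1/2) : ℝ))
        volume (-1) 1 := by
      have h0 : IntervalIntegrable (fun x : ℝ => x ^ (-(1/2) : ℝ)) volume 0 2 :=
        intervalIntegrable_rpow' (by norm_num)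
      have := (h0.comp_add_left 1)
      norm_num at this
      exact this.const_mul _
    apply hint.mono_fun
    · exact ((Real.continuous_sqrt.measurable.comp
        ((measurable_const.sub (measurable_id.pow_const 2)))).div
        (measurable_const.add measurable_id)).aestronglyMeasurable
    · rw [Filter.EventuallyLE, ae_restrict_iff' measurableSet_uIoc]
      refine Filter.Eventually.of_forall fun t ht => ?_
      rw [uIoc_of_le (by norm_num : (-1:ℝ) ≤ 1)] at ht
      obtain ⟨ht1, ht2⟩ := ht
      have h1t : 0 < 1 + t := by linarith
      have hnn : (0:ℝ) ≤ 1 - t^2 := by nlinarith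
      have hfnn : 0 ≤ Real.sqrt (1 - t^2) / (1 + t) := by positivity
      have key : Real.sqrt (1 - t^2) / (1 + t) = Real.sqrt (1-t) / Real.sqrt (1+t) := by
        rw [show 1 - t^2 = (1-t)*(1+t) by ring, Real.sqrt_mul (by linarith)]
        rw [div_eq_div_iff (by linarith) (Real.sqrt_pos.mpr h1t).ne']
        rw [mul_assoc, Real.mul_self_sqrt h1t.le]
      have hrpow : (1+t) ^ (-(1/2) : ℝ) = (Real.sqrt (1+t))⁻¹ := by
        rw [Real.rpow_neg h1t.le, Real.sqrt_eq_rpow]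
      simp only [Real.norm_eq_abs, abs_of_nonneg hfnn]
      have hg0 : (0:ℝ) ≤ Real.sqrt 2 * (1+t) ^ (-(1/2) : ℝ) := by positivity
      rw [abs_of_nonneg hg0, key, hrpow, div_eq_mul_inv]
      exact mul_le_mul_of_nonneg_right (Real.sqrt_le_sqrt (by linarith)) (by positivity)
  · -- a > 1 : continuous
    apply ContinuousOn.intervalIntegrable
    apply ContinuousOn.div
    · exact (Real.continuous_sqrt.comp (continuous_const.sub (continuous_pow 2))).continuousOn
    · exact (continuous_const.add continuous_id).continuousOn
    · intro t ht
      rw [uIcc_of_le (by norm_num : (-1:ℝ) ≤ 1)] at ht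
      have := ht.1
      intro h
      linarith

lemma int0 (a : ℝ) (ha : 1 ≤ |a|) :
    IntervalIntegrable (fun t => Real.sqrt (1 - t^2) / (a + t)) volume (-1) 1 := by
  rcases le_or_gt 1 a with h | h
  · exact int0_ge a h
  · have hb : 1 ≤ -a := by
      rcases abs_cases a with ⟨h1, h2⟩ | ⟨h1, h2⟩
      · rw [h1] at ha; linarith
      · rw [h1] at ha; linarith
    have hg := int0_ge (-a) hb
    have hg3 := ((IntervalIntegrable.iff_comp_neg (by simp)).mp hg.neg).symm
    simp only [Pi.neg_apply, neg_neg, neg_sq, ← neg_add, div_neg] at hg3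
    exact hg3

lemma J0_val_ge (a : ℝ) (ha : 1 ≤ a) :
    (∫ t in (-1:ℝ)..1, Real.sqrt (1 - t^2) / (a + t)) = π * (a - Real.sqrt (a^2 - 1)) := by
  rcases eq_or_lt_of_le ha with h1 | h1
  · subst h1
    rw [integral_eq_sub_of_hasDeriv_right_of_le (by norm_num)
      ((Real.continuous_arcsin.add
        (Real.continuous_sqrt.comp (continuous_const.sub (continuous_pow 2)))).continuousOn)
      (fun t ht => (hasDeriv_eq t ht.1 ht.2).hasDerivWithinAt)
      (int0_ge 1 le_rfl)]
    norm_num [Real.arcsin_one, Real.arcsin_neg_one]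
  · have hcont : ContinuousOn (fun t : ℝ => a * arcsin t + Real.sqrt (1 - t^2)
        - Real.sqrt (a^2-1) * arcsin ((1 + a*t)/(a+t))) (Icc (-1) 1) := by
      apply ContinuousOn.sub
      · exact ((continuous_const.mul Real.continuous_arcsin).add
          (Real.continuous_sqrt.comp (continuous_const.sub (continuous_pow 2)))).continuousOn
      · apply ContinuousOn.mul continuousOn_const
        apply Real.continuous_arcsin.comp_continuousOn
        apply ContinuousOn.div
        · exact (continuous_const.add (continuous_const.mul continuous_id)).continuousOn
        · exact (continuous_const.add continuous_id).continuousOn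
        · intro t ht
          have := ht.1
          intro h; linarith
    rw [integral_eq_sub_of_hasDeriv_right_of_le (by norm_num) hcont
      (fun t ht => (hasDeriv_gt a h1 t ht.1 ht.2).hasDerivWithinAt)
      (int0_ge a ha)]
    have e1 : (1 + a * 1)/(a + 1) = 1 := by
      rw [show 1 + a * 1 = a + 1 by ring]
      exact div_self (by linarith)
    have e2 : (1 + a * (-1))/(a + (-1)) = -1 := by
      rw [div_eq_iff (by intro h; linarith : a + (-1) ≠ 0)]
      ring
    rw [e1, e2]
    norm_num [Real.arcsin_one, Real.arcsin_neg_one]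
    ring

lemma neg_one_le_of_abs (a : ℝ) (ha : 1 ≤ |a|) (h : a < 1) : 1 ≤ -a := by
  rcases abs_cases a with ⟨h1, h2⟩ | ⟨h1, h2⟩
  · rw [h1] at ha; linarith
  · rw [h1] at ha; linarith

lemma J0_val (a : ℝ) (ha : 1 ≤ |a|) :
    (∫ t in (-1:ℝ)..1, Real.sqrt (1 - t^2) / (a + t)) = π * omegaFn a := by
  rcases le_or_gt 1 a with h | h
  · rw [J0_val_ge a h]
    unfold omegaFn
    rw [Real.sign_of_pos (by linarith : (0:ℝ) < a)]
    ring
  · have hb := neg_one_le_of_abs a ha h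
    have key := J0_val_ge (-a) hb
    have flip := intervalIntegral.integral_comp_neg (a := (-1:ℝ)) (b := 1)
      (fun t => -(Real.sqrt (1-t^2)/(-a+t)))
    simp only [neg_sq, ← neg_add, div_neg, neg_neg] at flip
    rw [flip, intervalIntegral.integral_neg, key]
    unfold omegaFn
    rw [Real.sign_of_neg (by linarith : a < (0:ℝ)), neg_sq]
    ring

lemma sqrt_zero_at (a t : ℝ) (ha : 1 ≤ |a|) (h : a + t = 0) : Real.sqrt (1 - t^2) = 0 := by
  apply Real.sqrt_eq_zero_of_nonpos
  have h2 : 1 ≤ a^2 := by nlinarith [sq_abs a, ha]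
  have : t = -a := by linarith
  rw [this]; nlinarith

lemma chebF_zero (a : ℝ) (t : ℝ) : chebF a 0 t = Real.sqrt (1-t^2)/(a+t) := by
  unfold chebF
  simp [Polynomial.Chebyshev.U_zero]

lemma chebF_one_eq (a : ℝ) (ha : 1 ≤ |a|) (t : ℝ) :
    chebF a 1 t = 2 * Real.sqrt (1 - t^2) - 2*a*chebF a 0 t := by
  unfold chebF
  rcases eq_or_ne (a + t) 0 with h | h
  · simp [h, sqrt_zero_at a t ha h]
  · simp only [Polynomial.Chebyshev.U_one, Polynomial.Chebyshev.U_zero, Polynomial.eval_mul,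
      Polynomial.eval_ofNat, Polynomial.eval_X, Polynomial.eval_one]
    field_simp
    ring

lemma chebF_add_two (a : ℝ) (ha : 1 ≤ |a|) (n : ℤ) (t : ℝ) :
    chebF a (n+2) t = 2 * (Chebyshev.U ℝ (n+1)).eval t * Real.sqrt (1-t^2)
      - 2*a*chebF a (n+1) t - chebF a n t := by
  unfold chebF
  rcases eq_or_ne (a + t) 0 with h | h
  · simp [h, sqrt_zero_at a t ha h]
  · rw [Polynomial.Chebyshev.U_add_two]
    simp only [Polynomial.eval_sub, Polynomial.eval_mul, Polynomial.eval_ofNat, Polynomial.eval_X]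
    field_simp
    ring

lemma contU (m : ℤ) : Continuous (fun t : ℝ => (Chebyshev.U ℝ m).eval t * Real.sqrt (1 - t ^ 2)) :=
  ((Chebyshev.U ℝ m).continuous).mul
    (Real.continuous_sqrt.comp (continuous_const.sub (continuous_pow 2)))

lemma contU2 (m : ℤ) : Continuous (fun t : ℝ => 2 * (Chebyshev.U ℝ m).eval t * Real.sqrt (1 - t ^ 2)) := by
  rw [show (fun t : ℝ => 2 * (Chebyshev.U ℝ m).eval t * Real.sqrt (1 - t ^ 2))
    = (fun t : ℝ => 2 * ((Chebyshev.U ℝ m).eval t * Real.sqrt (1 - t ^ 2))) by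
      funext t; ring]
  exact continuous_const.mul (contU m)

lemma chebF_int_zero (a : ℝ) (ha : 1 ≤ |a|) : IntervalIntegrable (chebF a 0) volume (-1) 1 := by
  rw [show chebF a 0 = (fun t => Real.sqrt (1-t^2)/(a+t)) from funext (chebF_zero a)]
  exact int0 a ha

lemma chebF_int_pair (a : ℝ) (ha : 1 ≤ |a|) (n : ℕ) :
    IntervalIntegrable (chebF a n) volume (-1) 1 ∧
    IntervalIntegrable (chebF a (n+1)) volume (-1) 1 := by
  induction n with
  | zero =>
    refine ⟨chebF_int_zero a ha, ?_⟩
    rw [show ((0:ℕ):ℤ) + 1 = 1 by norm_num,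
      show chebF a 1 = (fun t => 2 * Real.sqrt (1 - t^2) - 2*a*chebF a 0 t)
        from funext (chebF_one_eq a ha)]
    exact (((continuous_const.mul (Real.continuous_sqrt.comp (continuous_const.sub
      (continuous_pow 2)))).intervalIntegrable _ _).sub
      ((chebF_int_zero a ha).const_mul (2*a)))
  | succ n ih =>
    refine ⟨by exact_mod_cast ih.2, ?_⟩
    have hc : ((n:ℤ) + 1 + 1 : ℤ) = (n:ℤ) + 2 := by ring
    rw [show (((n+1:ℕ)):ℤ) + 1 = (n:ℤ) + 2 by push_cast; ring]
    rw [show chebF a ((n:ℤ)+2) = (fun t => 2 * (Chebyshev.U ℝ ((n:ℤ)+1)).eval t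
      * Real.sqrt (1-t^2) - 2*a*chebF a ((n:ℤ)+1) t - chebF a (n:ℤ) t)
        from funext (chebF_add_two a ha n)]
    have h1 : IntervalIntegrable (chebF a ((n:ℤ)+1)) volume (-1) 1 := by exact_mod_cast ih.2
    have hcont := contU2 ((n:ℤ)+1)
    exact ((hcont.intervalIntegrable _ _).sub (h1.const_mul (2*a))).sub ih.1

lemma J_val (a : ℝ) (ha : 1 ≤ |a|) (n : ℕ) :
    (∫ t in (-1:ℝ)..1, chebF a n t) =
      π * (omegaFn a * (Chebyshev.U ℝ n).eval (-a) +
        (Chebyshev.U ℝ ((n:ℤ)-1)).eval (-a)) := by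
  induction n using Nat.twoStepInduction with
  | zero =>
    rw [show chebF a ((0:ℕ):ℤ) = (fun t => Real.sqrt (1-t^2)/(a+t)) from funext (chebF_zero a)]
    rw [J0_val a ha]
    norm_num [Polynomial.Chebyshev.U_zero, Polynomial.Chebyshev.U_neg_one]
  | one =>
    rw [show (((1:ℕ)):ℤ) = 1 by norm_num,
      show chebF a 1 = (fun t => 2 * Real.sqrt (1 - t^2) - 2*a*chebF a 0 t)
        from funext (chebF_one_eq a ha)]
    have hi : IntervalIntegrable (fun t : ℝ => 2 * Real.sqrt (1 - t^2)) volume (-1) 1 :=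
      (continuous_const.mul (Real.continuous_sqrt.comp (continuous_const.sub
        (continuous_pow 2)))).intervalIntegrable _ _
    rw [intervalIntegral.integral_sub hi ((chebF_int_zero a ha).const_mul (2*a)),
      intervalIntegral.integral_const_mul, intervalIntegral.integral_const_mul,
      integral_sqrt_one_sub_sq]
    rw [show chebF a 0 = (fun t => Real.sqrt (1-t^2)/(a+t)) from funext (chebF_zero a), J0_val a ha]
    simp only [Polynomial.Chebyshev.U_one, Polynomial.Chebyshev.U_zero, Polynomial.eval_mul,
      Polynomial.eval_ofNat, Polynomial.eval_X, Polynomial.eval_one]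
    norm_num
    ring
  | more n ih1 ih2 =>
    have hc2 : (((n+2:ℕ)):ℤ) = (n:ℤ) + 2 := by push_cast; ring
    have hc1 : (((n+1:ℕ)):ℤ) = (n:ℤ) + 1 := by push_cast; ring
    rw [hc2]
    rw [show chebF a ((n:ℤ)+2) = (fun t => 2 * (Chebyshev.U ℝ ((n:ℤ)+1)).eval t
      * Real.sqrt (1-t^2) - 2*a*chebF a ((n:ℤ)+1) t - chebF a (n:ℤ) t)
        from funext (chebF_add_two a ha n)]
    have hcont := contU2 ((n:ℤ)+1)
    have h1 : IntervalIntegrable (chebF a ((n:ℤ)+1)) volume (-1) 1 := by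
      have := (chebF_int_pair a ha n).2; exact_mod_cast this
    have h0 : IntervalIntegrable (chebF a (n:ℤ)) volume (-1) 1 := (chebF_int_pair a ha n).1
    rw [intervalIntegral.integral_sub ((hcont.intervalIntegrable _ _).sub
      (h1.const_mul (2*a))) h0,
      intervalIntegral.integral_sub (hcont.intervalIntegrable _ _) (h1.const_mul (2*a)),
      intervalIntegral.integral_const_mul]
    have hK : (∫ t in (-1:ℝ)..1, (Chebyshev.U ℝ ((n:ℤ)+1)).eval t * Real.sqrt (1-t^2)) = 0 :=
      Kzero ((n:ℤ)+1) (by omega)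
    have hmul : (∫ t in (-1:ℝ)..1, 2 * (Chebyshev.U ℝ ((n:ℤ)+1)).eval t * Real.sqrt (1-t^2))
        = 0 := by
      rw [show (fun t : ℝ => 2 * (Chebyshev.U ℝ ((n:ℤ)+1)).eval t * Real.sqrt (1-t^2))
        = (fun t : ℝ => 2 * ((Chebyshev.U ℝ ((n:ℤ)+1)).eval t * Real.sqrt (1-t^2))) by
          funext t; ring]
      rw [intervalIntegral.integral_const_mul, hK]; ring
    rw [hmul]
    rw [hc1] at ih2
    rw [ih1, ih2]
    have e2 : (Chebyshev.U ℝ ((n:ℤ)+2)).eval (-a)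
        = 2*(-a)*(Chebyshev.U ℝ ((n:ℤ)+1)).eval (-a) - (Chebyshev.U ℝ ((n:ℤ))).eval (-a) := by
      rw [Polynomial.Chebyshev.U_add_two]
      simp
    have e1 : (Chebyshev.U ℝ ((n:ℤ)+1)).eval (-a)
        = 2*(-a)*(Chebyshev.U ℝ ((n:ℤ))).eval (-a) - (Chebyshev.U ℝ ((n:ℤ)-1)).eval (-a) := by
      have h := Polynomial.Chebyshev.U_add_two ℝ ((n:ℤ)-1)
      rw [show (n:ℤ)-1+2 = (n:ℤ)+1 by ring, show (n:ℤ)-1+1 = (n:ℤ) by ring] at h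
      rw [h]
      simp
    rw [show (n:ℤ)+2-1 = (n:ℤ)+1 by ring, e2, e1]
    ring

end QFnAux

open Polynomial in
/-- The associated function `q_n(-2a)` of the Chebyshev polynomials of the second kind. -/
theorem qFn_chebyshev_eval (a : ℝ) (ha : 1 ≤ |a|) (n : ℕ) :
    (1 / Real.pi) *
        ∫ u in (-2 : ℝ)..2,
          (Chebyshev.U ℝ n).eval (u / 2) * Real.sqrt (1 - u ^ 2 / 4) / (-2 * a - u) =
      -(omegaFn a * (Chebyshev.U ℝ n).eval (-a) +
          (Chebyshev.U ℝ ((n : ℤ) - 1)).eval (-a)) := by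
  have hdiv : ∀ (x y : ℝ), x / (-2*a - 2*y) = -(x/(a+y))/2 := by
    intro x y
    rw [show -2*a - 2*y = (a+y)*(-2) by ring, ← div_div]
    ring
  have hfun : (fun u : ℝ => (Chebyshev.U ℝ n).eval (u / 2) * Real.sqrt (1 - u ^ 2 / 4)
        / (-2 * a - u))
      = fun u : ℝ => -(QFnAux.chebF a n (u/2))/2 := by
    funext u
    have h1 : 1 - u^2/4 = 1 - (u/2)^2 := by ring
    have h2 : -2*a - u = -2*a - 2*(u/2) := by ring
    rw [h1, h2, hdiv]
    rfl
  rw [hfun]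
  have h2 := intervalIntegral.inv_mul_integral_comp_div (a := (-2:ℝ)) (b := 2) (c := 2)
    (f := fun t => -(QFnAux.chebF a n t)/2)
  rw [show (-2:ℝ)/2 = -1 by norm_num, show (2:ℝ)/2 = 1 by norm_num] at h2
  have h3 : (∫ x in (-1:ℝ)..1, -(QFnAux.chebF a n x)/2)
      = -(π * (omegaFn a * (Chebyshev.U ℝ n).eval (-a) +
          (Chebyshev.U ℝ ((n : ℤ) - 1)).eval (-a)))/2 := by
    rw [intervalIntegral.integral_div, intervalIntegral.integral_neg, QFnAux.J_val a ha n]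
  rw [h3] at h2
  have hI : (∫ u in (-2:ℝ)..2, -(QFnAux.chebF a n (u/2))/2)
      = -(π * (omegaFn a * (Chebyshev.U ℝ n).eval (-a) +
          (Chebyshev.U ℝ ((n : ℤ) - 1)).eval (-a))) := by
    linarith [h2]
  rw [hI]
  have hpi := Real.pi_ne_zero
  field_simp
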